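/- Let A be a C*-algebra, M a Hilbert A-module, and x₁, …, xₙ ∈ M a normalized tight frame, i.e. x = Σᵢ ⟨x, xᵢ⟩ xᵢ for every x ∈ M. Let N be a Hilbert A-module and ψ : M → N an A-linear (not assumed continuous) map. Then ψ is bounded, with ‖ψ(x)‖ ≤ (Σᵢ ‖xᵢ‖^{1/2} ‖ψ(xᵢ)‖^{1/2}) ‖x‖^{1/2} ‖ψ(x)‖^{1/2} for all x, hence ‖ψ(x)‖ ≤ (Σᵢ ‖xᵢ‖^{1/2} ‖ψ(xᵢ)‖^{1/2})² ‖x‖. -/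

import Mathlib

open scoped RightActions InnerProductSpace

/-- The Hilbert C⋆-module class as it stood in Mathlib (Dec 2024): a complex module `E` with a
right `A`-action (`SMul Aᵐᵒᵖ E`) and an inner product with `⟪x, y <• a⟫ = ⟪x, y⟫ * a`.
Mathlib's current `CStarModule` uses a left action with `⟪x, a • y⟫ = a * ⟪x, y⟫` instead. -/
class CStarModuleRight (A : outParam <| Type*) (E : Type*) [NonUnitalSemiring A] [StarRing A]
    [Module ℂ A] [AddCommGroup E] [Module ℂ E] [PartialOrder A] [SMul Aᵐᵒᵖ E] [Norm A] [Norm E]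
    extends Inner A E where
  inner_add_right {x} {y} {z} : inner x (y + z) = inner x y + inner x z
  inner_self_nonneg {x} : 0 ≤ inner x x
  inner_self {x} : inner x x = 0 ↔ x = 0
  inner_op_smul_right {a : A} {x y : E} : inner x (y <• a) = inner x y * a
  inner_smul_right_complex {z : ℂ} {x} {y} : inner x (z • y) = z • inner x y
  star_inner x y : star (inner x y) = inner y x
  norm_eq_sqrt_norm_inner_self x : ‖x‖ = √‖inner x x‖

namespace CStarModuleRight

section port

variable {A : Type*} [NonUnitalCStarAlgebra A] [PartialOrder A] [StarOrderedRing A]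
  {E : Type*} [NormedAddCommGroup E] [NormedSpace ℂ E] [SMul Aᵐᵒᵖ E] [CStarModuleRight A E]

lemma norm_sq_eq' (x : E) : ‖x‖ ^ 2 = ‖⟪x, x⟫_A‖ := by
  rw [norm_eq_sqrt_norm_inner_self (A := A) x, Real.sq_sqrt (norm_nonneg _)]

lemma inner_sub_right' (x y z : E) : ⟪x, y - z⟫_A = ⟪x, y⟫_A - ⟪x, z⟫_A :=
  map_sub (AddMonoidHom.mk' (fun y => ⟪x, y⟫_A) (fun _ _ => inner_add_right)) y z

lemma inner_sub_left' (x y z : E) : ⟪x - y, z⟫_A = ⟪x, z⟫_A - ⟪y, z⟫_A := by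
  rw [← star_inner z, inner_sub_right', star_sub, star_inner, star_inner]

lemma inner_zero_left' (y : E) : ⟪(0 : E), y⟫_A = 0 := by
  have := inner_sub_left' (A := A) (0 : E) 0 y
  simpa using this

lemma inner_op_smul_left' (a : A) (x y : E) : ⟪x <• a, y⟫_A = star a * ⟪x, y⟫_A := by
  rw [← star_inner y, inner_op_smul_right, star_mul, star_inner]

lemma inner_smul_right_real' (r : ℝ) (x y : E) : ⟪x, r • y⟫_A = r • ⟪x, y⟫_A := by
  rw [← Complex.coe_smul, inner_smul_right_complex, Complex.coe_smul]

lemma inner_smul_left_real' (r : ℝ) (x y : E) : ⟪r • x, y⟫_A = r • ⟪x, y⟫_A := by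
  rw [← star_inner y, inner_smul_right_real', star_smul, star_inner, star_trivial]

lemma norm_inner_le' (x y : E) : ‖⟪x, y⟫_A‖ ≤ ‖x‖ * ‖y‖ := by
  rcases eq_or_ne x 0 with h | h
  · subst h; simp [inner_zero_left']
  have hx : 0 < ‖x‖ := norm_pos_iff.mpr h
  have key : star ⟪x, y⟫_A * ⟪x, y⟫_A ≤ ‖x‖ ^ 2 • ⟪y, y⟫_A := by
    have h1 : 0 ≤ ‖x‖ ^ 2 • (‖x‖ ^ 2 • ⟪y, y⟫_A - star ⟪x, y⟫_A * ⟪x, y⟫_A) := by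
      calc (0 : A) ≤ ⟪x <• ⟪x, y⟫_A - ‖x‖ ^ 2 • y, x <• ⟪x, y⟫_A - ‖x‖ ^ 2 • y⟫_A :=
            inner_self_nonneg
        _ = star ⟪x, y⟫_A * ⟪x, x⟫_A * ⟪x, y⟫_A - ‖x‖ ^ 2 • (star ⟪x, y⟫_A * ⟪x, y⟫_A)
              - ‖x‖ ^ 2 • (star ⟪x, y⟫_A * ⟪x, y⟫_A) + ‖x‖ ^ 2 • (‖x‖ ^ 2 • ⟪y, y⟫_A) := by
            simp only [inner_sub_left', inner_sub_right', inner_op_smul_left',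
              inner_op_smul_right, inner_smul_left_real', inner_smul_right_real', smul_sub,
              star_inner x y, sub_mul, mul_sub, smul_mul_assoc, mul_smul_comm, mul_assoc]
            abel
        _ ≤ ‖x‖ ^ 2 • (star ⟪x, y⟫_A * ⟪x, y⟫_A) - ‖x‖ ^ 2 • (star ⟪x, y⟫_A * ⟪x, y⟫_A)
              - ‖x‖ ^ 2 • (star ⟪x, y⟫_A * ⟪x, y⟫_A) + ‖x‖ ^ 2 • (‖x‖ ^ 2 • ⟪y, y⟫_A) := by
            gcongr
            rw [norm_sq_eq' (A := A) x]
            exact CStarAlgebra.star_left_conjugate_le_norm_smul (hb := star_inner x x)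
        _ = ‖x‖ ^ 2 • (‖x‖ ^ 2 • ⟪y, y⟫_A - star ⟪x, y⟫_A * ⟪x, y⟫_A) := by
            rw [smul_sub]; abel
    have h2 := smul_nonneg (inv_nonneg.mpr (pow_pos hx 2).le) h1
    rw [smul_smul, inv_mul_cancel₀ (pow_pos hx 2).ne', one_smul] at h2
    exact sub_nonneg.mp h2
  have := calc ‖⟪x, y⟫_A‖ ^ 2 = ‖star ⟪x, y⟫_A * ⟪x, y⟫_A‖ := by
                rw [CStarRing.norm_star_mul_self, pow_two]
    _ ≤ ‖‖x‖ ^ 2 • ⟪y, y⟫_A‖ :=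
                CStarAlgebra.norm_le_norm_of_nonneg_of_le (star_mul_self_nonneg _) key
    _ = ‖x‖ ^ 2 * ‖y‖ ^ 2 := by
                rw [norm_smul, norm_sq_eq' (A := A) y]; simp
    _ = (‖x‖ * ‖y‖) ^ 2 := by ring
  exact (pow_le_pow_iff_left₀ (norm_nonneg _) (by positivity) two_ne_zero).mp this

end port

end CStarModuleRight

open CStarModule in
private lemma norm_op_smul_le' {A : Type*} [NonUnitalCStarAlgebra A] [PartialOrder A]
    [StarOrderedRing A] {N : Type*} [NormedAddCommGroup N] [NormedSpace ℂ N] [SMul Aᵐᵒᵖ N]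
    [CStarModuleRight A N] (y : N) (a : A) : ‖y <• a‖ ≤ ‖y‖ * ‖a‖ := by
  have h : ‖y <• a‖ ^ 2 ≤ ‖y <• a‖ * (‖y‖ * ‖a‖) := by
    rw [CStarModuleRight.norm_sq_eq']
    calc ‖⟪y <• a, y <• a⟫_A‖ = ‖⟪y <• a, y⟫_A * a‖ := by
          rw [CStarModuleRight.inner_op_smul_right]
      _ ≤ ‖⟪y <• a, y⟫_A‖ * ‖a‖ := norm_mul_le _ _
      _ ≤ (‖y <• a‖ * ‖y‖) * ‖a‖ := by
          gcongr; exact CStarModuleRight.norm_inner_le' _ _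
      _ = ‖y <• a‖ * (‖y‖ * ‖a‖) := by ring
  nlinarith [h, norm_nonneg (y <• a), mul_nonneg (norm_nonneg y) (norm_nonneg a)]

/-- If `x₁, …, xₙ` is a normalized tight frame of a Hilbert C*-module `M` (i.e.
`x = Σᵢ ⟨x, xᵢ⟩ xᵢ` for all `x`) and `ψ : M → N` is an `A`-linear (not assumed continuous)
map into a Hilbert C*-module `N`, then
`‖ψ(x)‖ ≤ (Σᵢ ‖xᵢ‖^{1/2} ‖ψ(xᵢ)‖^{1/2}) ‖x‖^{1/2} ‖ψ(x)‖^{1/2}` for all `x`, and hence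
`‖ψ(x)‖ ≤ (Σᵢ ‖xᵢ‖^{1/2} ‖ψ(xᵢ)‖^{1/2})² ‖x‖`; in particular `ψ` is bounded. -/
theorem stmt_6 {A : Type*} [NonUnitalCStarAlgebra A] [PartialOrder A] [StarOrderedRing A]
    {M : Type*} [NormedAddCommGroup M] [NormedSpace ℂ M] [SMul Aᵐᵒᵖ M] [CStarModuleRight A M]
    [CompleteSpace M]
    {N : Type*} [NormedAddCommGroup N] [NormedSpace ℂ N] [SMul Aᵐᵒᵖ N] [CStarModuleRight A N]
    [CompleteSpace N]
    {n : ℕ} (e : Fin n → M)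
    (hframe : ∀ x : M, x = ∑ i, e i <• (⟪e i, x⟫_A))
    (ψ : M →ₗ[ℂ] N)
    (hψ : ∀ (a : A) (x : M), ψ (x <• a) = ψ x <• a) :
    (∀ x : M, ‖ψ x‖ ≤
        (∑ i, Real.sqrt ‖e i‖ * Real.sqrt ‖ψ (e i)‖) *
          Real.sqrt ‖x‖ * Real.sqrt ‖ψ x‖) ∧
    (∀ x : M, ‖ψ x‖ ≤ (∑ i, Real.sqrt ‖e i‖ * Real.sqrt ‖ψ (e i)‖) ^ 2 * ‖x‖) := by
  set C : ℝ := ∑ i, Real.sqrt ‖e i‖ * Real.sqrt ‖ψ (e i)‖ with hC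
  set D : ℝ := ∑ i, ‖e i‖ * ‖ψ (e i)‖ with hD
  have hCnn : 0 ≤ C := Finset.sum_nonneg fun i _ => by positivity
  have hDnn : 0 ≤ D := Finset.sum_nonneg fun i _ => by positivity
  -- the key estimate: `‖ψ x‖ ≤ D * ‖x‖`
  have key : ∀ x : M, ‖ψ x‖ ≤ D * ‖x‖ := by
    intro x
    calc ‖ψ x‖ = ‖ψ (∑ i, e i <• (⟪e i, x⟫_A))‖ := by rw [← hframe]
      _ = ‖∑ i, ψ (e i <• (⟪e i, x⟫_A))‖ := by rw [map_sum]
      _ ≤ ∑ i, ‖ψ (e i <• (⟪e i, x⟫_A))‖ := norm_sum_le _ _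
      _ ≤ ∑ i, ‖e i‖ * ‖ψ (e i)‖ * ‖x‖ := by
          refine Finset.sum_le_sum fun i _ => ?_
          rw [hψ]
          calc ‖ψ (e i) <• ⟪e i, x⟫_A‖ ≤ ‖ψ (e i)‖ * ‖⟪e i, x⟫_A‖ :=
                norm_op_smul_le' _ _
            _ ≤ ‖ψ (e i)‖ * (‖e i‖ * ‖x‖) := by
                gcongr; exact CStarModuleRight.norm_inner_le' _ _
            _ = ‖e i‖ * ‖ψ (e i)‖ * ‖x‖ := by ring
      _ = D * ‖x‖ := by rw [hD, Finset.sum_mul]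
  -- `D ≤ C ^ 2`
  have hDC : D ≤ C ^ 2 := by
    rw [hC, hD]
    have := Finset.sum_sq_le_sq_sum_of_nonneg
      (s := Finset.univ) (f := fun i => Real.sqrt ‖e i‖ * Real.sqrt ‖ψ (e i)‖)
      (fun i _ => by positivity)
    refine le_trans (le_of_eq ?_) this
    refine Finset.sum_congr rfl fun i _ => ?_
    rw [mul_pow, Real.sq_sqrt (norm_nonneg _), Real.sq_sqrt (norm_nonneg _)]
  have key2 : ∀ x : M, ‖ψ x‖ ≤ C ^ 2 * ‖x‖ := fun x =>
    (key x).trans (by gcongr)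
  refine ⟨fun x => ?_, key2⟩
  have h1 : ‖ψ x‖ ^ 2 ≤ (C * Real.sqrt ‖x‖ * Real.sqrt ‖ψ x‖) ^ 2 := by
    have : (C * Real.sqrt ‖x‖ * Real.sqrt ‖ψ x‖) ^ 2 = C ^ 2 * ‖x‖ * ‖ψ x‖ := by
      rw [mul_pow, mul_pow, Real.sq_sqrt (norm_nonneg _), Real.sq_sqrt (norm_nonneg _)]
    rw [this, sq]
    exact mul_le_mul_of_nonneg_right (key2 x) (norm_nonneg _)
  have h2 : 0 ≤ C * Real.sqrt ‖x‖ * Real.sqrt ‖ψ x‖ := by positivity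
  exact (pow_le_pow_iff_left₀ (norm_nonneg _) h2 two_ne_zero).mp h1
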